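/- As t → ∞, both derivatives a1'(t) and a2'(t) converge to the common limit (α21·v1 + α12·v2)/α. -/

import Mathlib

open Filter Real

/-- As `t → ∞`, both derivatives `a1'` and `a2'` converge to
`(α21 * v1 + α12 * v2)/(α12 + α21)`. -/
theorem stmt_2 (v1 v2 α12 α21 : ℝ) (h12 : 0 < α12) (h21 : 0 < α21)
    (a1 a2 : ℝ → ℝ)
    (h1 : ∀ t : ℝ, 0 ≤ t → HasDerivAt a1 (v1 + α12 * (a2 t - a1 t)) t)
    (h2 : ∀ t : ℝ, 0 ≤ t → HasDerivAt a2 (v2 + α21 * (a1 t - a2 t)) t) :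
    Filter.Tendsto (deriv a1) Filter.atTop
      (nhds ((α21 * v1 + α12 * v2) / (α12 + α21))) ∧
    Filter.Tendsto (deriv a2) Filter.atTop
      (nhds ((α21 * v1 + α12 * v2) / (α12 + α21))) := by
  set α : ℝ := α12 + α21 with hα
  have hαpos : 0 < α := by positivity
  have hαne : α ≠ 0 := hαpos.ne'
  set L : ℝ := (v2 - v1) / α with hL
  set d : ℝ → ℝ := fun t => a2 t - a1 t with hd
  -- derivative of d
  have hd' : ∀ t : ℝ, 0 ≤ t → HasDerivAt d (-α * (d t - L)) t := by
    intro t ht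
    have := (h2 t ht).sub (h1 t ht)
    refine HasDerivAt.congr_deriv this ?_
    simp only [hd, hL]
    field_simp
    ring
  set g : ℝ → ℝ := fun t => (d t - L) * Real.exp (α * t) with hg
  have hg' : ∀ t : ℝ, 0 ≤ t → HasDerivAt g 0 t := by
    intro t ht
    have he : HasDerivAt (fun t => Real.exp (α * t)) (Real.exp (α * t) * α) t := by
      simpa using ((hasDerivAt_id t).const_mul α).exp
    have := ((hd' t ht).sub_const L).mul he
    refine HasDerivAt.congr_deriv this ?_
    ring
  have hconst : ∀ t : ℝ, 0 ≤ t → g t = g 0 := by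
    intro t ht
    have hcont : ContinuousOn g (Set.Icc 0 t) := fun x hx =>
      ((hg' x hx.1).continuousAt).continuousWithinAt
    have := constant_of_has_deriv_right_zero hcont (fun x hx =>
      (hg' x hx.1).hasDerivWithinAt) t (Set.mem_Icc.2 ⟨ht, le_refl t⟩)
    exact this
  set C : ℝ := g 0 with hC
  have hdval : ∀ t : ℝ, 0 ≤ t → d t = L + C * Real.exp (-(α * t)) := by
    intro t ht
    have h0 := hconst t ht
    have hepos : Real.exp (α * t) ≠ 0 := (Real.exp_pos _).ne'
    have : (d t - L) = C * Real.exp (-(α * t)) := by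
      rw [Real.exp_neg]
      field_simp
      simpa [hg] using h0
    linarith [this]
  have hexp : Tendsto (fun t : ℝ => Real.exp (-(α * t))) atTop (nhds 0) := by
    apply Real.tendsto_exp_atBot.comp
    apply tendsto_neg_atTop_atBot.comp
    exact (tendsto_const_mul_atTop_of_pos hαpos).2 tendsto_id
  have hdlim : Tendsto d atTop (nhds L) := by
    have h1 : Tendsto (fun t : ℝ => L + C * Real.exp (-(α * t))) atTop (nhds (L + C * 0)) :=
      tendsto_const_nhds.add (tendsto_const_nhds.mul hexp)
    rw [mul_zero, add_zero] at h1
    refine h1.congr' ?_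
    filter_upwards [eventually_ge_atTop (0:ℝ)] with t ht
    exact (hdval t ht).symm
  constructor
  · have htarget : Tendsto (fun t : ℝ => v1 + α12 * d t) atTop (nhds (v1 + α12 * L)) :=
      tendsto_const_nhds.add (tendsto_const_nhds.mul hdlim)
    have heq : v1 + α12 * L = (α21 * v1 + α12 * v2) / (α12 + α21) := by
      rw [hL]; field_simp; ring
    rw [← heq]
    refine htarget.congr' ?_
    filter_upwards [eventually_ge_atTop (0:ℝ)] with t ht
    exact ((h1 t ht).deriv).symm
  · have htarget : Tendsto (fun t : ℝ => v2 + α21 * (-(d t))) atTop (nhds (v2 + α21 * (-L))) :=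
      tendsto_const_nhds.add (tendsto_const_nhds.mul hdlim.neg)
    have heq : v2 + α21 * (-L) = (α21 * v1 + α12 * v2) / (α12 + α21) := by
      rw [hL]; field_simp; ring
    rw [← heq]
    refine htarget.congr' ?_
    filter_upwards [eventually_ge_atTop (0:ℝ)] with t ht
    have := (h2 t ht).deriv
    rw [this]
    simp [hd]
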